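/- Let s ∈ ℝ, C₁ > 0, and let (v_n)_{n ≥ 1} be a sequence of non-negative reals satisfying v_n ≤ C₁ · Σ_{a,b ≥ 1, a+b=n} v_a v_b + C₁ e^{s n} for all n ≥ 1. Then (v_n) grows at most exponentially: there exists R > 0 such that v_n ≤ R^n for all n ≥ 1. -/

import Mathlib

open Finset

lemma catalan_le_four_pow (n : ℕ) : catalan n ≤ 4 ^ n := by
  have h1 : catalan n ≤ n.centralBinom := by
    calc catalan n ≤ (n+1) * catalan n := Nat.le_mul_of_pos_left _ n.succ_pos
    _ = n.centralBinom := succ_mul_catalan_eq_centralBinom n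
  refine h1.trans ?_
  have h2 : n.centralBinom ≤ 2 ^ (2 * n) := by
    have := Finset.single_le_sum (f := fun m => (2*n).choose m)
      (fun i _ => Nat.zero_le _) (Finset.mem_range.mpr (show n < 2*n+1 by omega))
    rw [Nat.sum_range_choose (2 * n)] at this
    rwa [← Nat.centralBinom_eq_two_mul_choose] at this
  calc n.centralBinom ≤ 2 ^ (2*n) := h2
  _ = 4 ^ n := by rw [pow_mul]; norm_num

lemma catalan_conv (n : ℕ) (hn : 2 ≤ n) :
    ∑ a ∈ Finset.Ioo 0 n, catalan (a-1) * catalan (n-a-1) = catalan (n-1) := by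
  obtain ⟨m, rfl⟩ : ∃ m, n = m + 2 := ⟨n - 2, by omega⟩
  rw [show Finset.Ioo 0 (m+2) = Finset.Ico 1 (m+2) by rfl,
    Finset.sum_Ico_eq_sum_range]
  simp only [show m + 2 - 1 = m + 1 from rfl]
  rw [catalan_succ' m, Nat.sum_antidiagonal_eq_sum_range_succ (fun x y => catalan x * catalan y)]
  apply Finset.sum_congr (by norm_num)
  intro i hi
  simp only [Finset.mem_range] at hi
  congr 2 <;> omega


lemma one_le_catalan (m : ℕ) : 1 ≤ catalan m := by
  rcases Nat.eq_zero_or_pos (catalan m) with h | h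
  · exfalso
    have := succ_mul_catalan_eq_centralBinom m
    rw [h, mul_zero] at this
    exact (Nat.centralBinom_pos m).ne' this.symm
  · exact h

lemma catalan_conv_le (n : ℕ) (hn : 1 ≤ n) :
    ∑ a ∈ Finset.Ioo 0 n, catalan (a-1) * catalan (n-a-1) ≤ catalan (n-1) := by
  rcases eq_or_lt_of_le hn with h | h
  · simp [← h, show Finset.Ioo 0 1 = ∅ from rfl]
  · exact (catalan_conv n h).le

theorem stmt2 (v : ℕ → ℝ) (s C₁ : ℝ) (hC₁ : 0 < C₁) (hv : ∀ n, 0 ≤ v n)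
    (hrec : ∀ n ≥ 1, v n ≤ C₁ * (∑ a ∈ Finset.Ioo 0 n, v a * v (n - a)) + C₁ * Real.exp (s * n)) :
    ∃ R > 0, ∀ n ≥ 1, v n ≤ R ^ n := by
  set M : ℝ := max 1 (4 * C₁ ^ 2) with hM
  have hM1 : (1:ℝ) ≤ M := le_max_left _ _
  set A : ℝ := Real.exp s * M with hA
  have hA0 : 0 < A := mul_pos (Real.exp_pos s) (by linarith)
  set B : ℝ := 1 / (2 * C₁) with hB
  have hB0 : 0 < B := by positivity
  have key : ∀ n, 1 ≤ n → v n ≤ B * A ^ n * catalan (n-1) := by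
    intro n
    induction n using Nat.strong_induction_on with
    | _ n ih =>
      intro hn
      have hexp : Real.exp (s * n) = Real.exp s ^ n := by
        rw [mul_comm, Real.exp_nat_mul]
      have hAn : A ^ n = Real.exp s ^ n * M ^ n := mul_pow _ _ _
      have hexple : C₁ * Real.exp (s * n) ≤ B / 2 * A ^ n := by
        rw [hexp, hAn, hB]
        have hMn : 4 * C₁ ^ 2 ≤ M ^ n :=
          le_trans (le_max_right _ _) (le_self_pow₀ hM1 (by omega))
        have he : (0:ℝ) < Real.exp s ^ n := pow_pos (Real.exp_pos s) n
        rw [div_div, div_mul_eq_mul_div, one_mul, le_div_iff₀ (by linarith)]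
        calc C₁ * Real.exp s ^ n * (2 * C₁ * 2) = Real.exp s ^ n * (4 * C₁^2) := by ring
        _ ≤ Real.exp s ^ n * M ^ n := by nlinarith
      have hsum : ∑ a ∈ Finset.Ioo 0 n, v a * v (n - a)
          ≤ B^2 * A^n * (∑ a ∈ Finset.Ioo 0 n, ((catalan (a-1) * catalan (n-a-1) : ℕ) : ℝ)) := by
        rw [Finset.mul_sum]
        apply Finset.sum_le_sum
        intro a ha
        simp only [Finset.mem_Ioo] at ha
        have h1 : v a ≤ B * A ^ a * catalan (a-1) := ih a ha.2 ha.1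
        have h2 : v (n-a) ≤ B * A ^ (n-a) * catalan (n-a-1) := ih (n-a) (by omega) (by omega)
        have hmul := mul_le_mul h1 h2 (hv _) (by positivity)
        refine hmul.trans (le_of_eq ?_)
        have hpow : A ^ a * A ^ (n - a) = A ^ n := by
          rw [← pow_add]; congr 1; omega
        push_cast
        rw [← hpow]; ring
      have hcat : (∑ a ∈ Finset.Ioo 0 n, ((catalan (a-1) * catalan (n-a-1) : ℕ) : ℝ))
          ≤ (catalan (n-1) : ℝ) := by
        rw [← Nat.cast_sum]
        exact_mod_cast catalan_conv_le n hn
      have hcat1 : (1:ℝ) ≤ (catalan (n-1) : ℝ) := by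
        exact_mod_cast one_le_catalan (n-1)
      have hCB : C₁ * B ^ 2 = B / 2 := by
        rw [hB]; field_simp
      have hBA : (0:ℝ) ≤ B ^ 2 * A ^ n := by positivity
      calc v n ≤ C₁ * (∑ a ∈ Finset.Ioo 0 n, v a * v (n - a)) + C₁ * Real.exp (s * n) :=
            hrec n hn
      _ ≤ C₁ * (B^2 * A^n * (∑ a ∈ Finset.Ioo 0 n, ((catalan (a-1) * catalan (n-a-1) : ℕ) : ℝ)))
            + B / 2 * A ^ n :=
          add_le_add (mul_le_mul_of_nonneg_left hsum hC₁.le) hexple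
      _ ≤ C₁ * (B^2 * A^n * (catalan (n-1) : ℝ)) + B / 2 * A ^ n :=
          add_le_add_left (mul_le_mul_of_nonneg_left
            (mul_le_mul_of_nonneg_left hcat hBA) hC₁.le) _
      _ = B / 2 * A ^ n * catalan (n-1) + B / 2 * A ^ n := by rw [← hCB]; ring
      _ ≤ B / 2 * A ^ n * catalan (n-1) + B / 2 * A ^ n * catalan (n-1) :=
          add_le_add le_rfl (le_mul_of_one_le_right (by positivity) hcat1)
      _ = B * A ^ n * catalan (n-1) := by ring
  refine ⟨4 * A * max 1 B, by positivity, fun n hn => ?_⟩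
  have h1 := key n hn
  have h2 : (catalan (n-1) : ℝ) ≤ 4 ^ n := by
    have h3 := catalan_le_four_pow (n-1)
    have h4 : (4:ℕ) ^ (n-1) ≤ 4 ^ n := Nat.pow_le_pow_right (by norm_num) (by omega)
    exact_mod_cast h3.trans h4
  have hBle : B ≤ (max 1 B) ^ n := le_trans (le_max_right 1 B)
    (le_self_pow₀ (le_max_left 1 B) (by omega))
  calc v n ≤ B * A ^ n * catalan (n-1) := h1
  _ ≤ (max 1 B) ^ n * A ^ n * 4 ^ n :=
      mul_le_mul (mul_le_mul_of_nonneg_right hBle (by positivity)) h2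
        (by positivity) (by positivity)
  _ = (4 * A * max 1 B) ^ n := by ring
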